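/- Define polynomials C_n(q) by C_1(q) = q^k and C_{n}(q) = (C_{n-1}(q) + q)^k for n >= 2 (the first cut bound C_{k,n,2}). For fixed q ∈ [0,1] and k >= 2, the sequence C_n(q) is nondecreasing in n; it converges to the smallest solution z of z = (z+q)^k if and only if 0 <= q <= q*_k := ((k-1)/k^2) * k^{(k-2)/(k-1)}, and diverges to infinity for q > q*_k. -/

import Mathlib

open Filter Topology

/-- The first cut bound `C_{k,n,2}(q)` for tree percolation, defined by
`C_1(q) = q^k` and `C_n(q) = (C_{n-1}(q) + q)^k`.  Here `cutBound k q m`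
is `C_{m+1}(q)`. -/
noncomputable def cutBound (k : ℕ) (q : ℝ) : ℕ → ℝ
  | 0 => q ^ k
  | m + 1 => (cutBound k q m + q) ^ k

/-- The critical value `q*_k = ((k-1)/k^2) k^{(k-2)/(k-1)}` of the cut bounds. -/
noncomputable def qStar (k : ℕ) : ℝ :=
  (((k : ℝ) - 1) / (k : ℝ) ^ 2) * (k : ℝ) ^ (((k : ℝ) - 2) / ((k : ℝ) - 1))

/-- Auxiliary: the point where `t ↦ t - t^k` is maximized. -/
noncomputable def cAux (k : ℕ) : ℝ := (k : ℝ) ^ (-(((k : ℝ) - 1)⁻¹))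

lemma one_lt_cast {k : ℕ} (hk : 2 ≤ k) : (1:ℝ) < (k:ℝ) := by
  exact_mod_cast Nat.lt_of_lt_of_le one_lt_two hk

lemma cAux_pos {k : ℕ} (hk : 2 ≤ k) : 0 < cAux k :=
  Real.rpow_pos_of_pos (by have := one_lt_cast hk; linarith) _

lemma cAux_pow_pred {k : ℕ} (hk : 2 ≤ k) : cAux k ^ (k - 1) = ((k : ℝ))⁻¹ := by
  have hk1 := one_lt_cast hk
  have hk0 : (0:ℝ) < k := by linarith
  have hcast : ((k - 1 : ℕ) : ℝ) = (k:ℝ) - 1 := by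
    push_cast [Nat.cast_sub (by omega : 1 ≤ k)]; ring
  rw [cAux, ← Real.rpow_natCast ((k:ℝ) ^ (-(((k : ℝ) - 1)⁻¹))) (k-1),
    ← Real.rpow_mul hk0.le, hcast]
  rw [show -(((k : ℝ) - 1)⁻¹) * ((k:ℝ) - 1) = -1 by
    rw [neg_mul, inv_mul_cancel₀ (by linarith : (k:ℝ) - 1 ≠ 0)]]
  rw [Real.rpow_neg_one]

lemma cAux_pow {k : ℕ} (hk : 2 ≤ k) : cAux k ^ k = cAux k / k := by
  have h1 : cAux k ^ k = cAux k ^ (k - 1) * cAux k := by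
    rw [← pow_succ]
    congr 1
    omega
  rw [h1, cAux_pow_pred hk]
  ring

lemma qStar_eq {k : ℕ} (hk : 2 ≤ k) : qStar k = ((k:ℝ) - 1) * cAux k / k := by
  have hk1 := one_lt_cast hk
  have hk0 : (0:ℝ) < k := by linarith
  have h2 : ((k:ℝ))^2 = (k:ℝ) ^ ((2:ℕ):ℝ) := by rw [Real.rpow_natCast]
  have hkne : (k:ℝ) - 1 ≠ 0 := by linarith
  have he : ((k:ℝ) - 2) / ((k:ℝ) - 1) = 1 + (-(((k : ℝ) - 1)⁻¹)) := by
    field_simp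
    ring
  rw [qStar, cAux, he, Real.rpow_add hk0, Real.rpow_one]
  field_simp

/-- the AM-GM bound: for `t ≥ 0`, `t - t^k ≤ qStar k`. -/
lemma sub_pow_le_qStar {k : ℕ} (hk : 2 ≤ k) {t : ℝ} (ht : 0 ≤ t) :
    t - t ^ k ≤ qStar k := by
  have hk1 := one_lt_cast hk
  have hk0 : (0:ℝ) < k := by linarith
  set c := cAux k with hc
  have hcpos := cAux_pos hk
  have h := Real.geom_mean_le_arith_mean2_weighted
    (w₁ := 1/(k:ℝ)) (w₂ := ((k:ℝ)-1)/k) (p₁ := t^k) (p₂ := c^k)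
    (by positivity) (div_nonneg (by linarith) hk0.le) (pow_nonneg ht k) (pow_nonneg hcpos.le k)
    (by field_simp; ring)
  have e1 : (t^k : ℝ) ^ ((1:ℝ)/k) = t := by
    rw [← Real.rpow_natCast t k, ← Real.rpow_mul ht]
    rw [show (k:ℝ) * (1/k) = 1 by field_simp, Real.rpow_one]
  have e2 : (c^k : ℝ) ^ (((k:ℝ)-1)/k) = ((k:ℝ))⁻¹ := by
    rw [← Real.rpow_natCast c k, ← Real.rpow_mul hcpos.le]
    have hcast : ((k - 1 : ℕ) : ℝ) = (k:ℝ) - 1 := by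
      rw [Nat.cast_sub (by omega : 1 ≤ k), Nat.cast_one]
    rw [show (k:ℝ) * (((k:ℝ)-1)/k) = ((k-1:ℕ):ℝ) by rw [hcast]; field_simp]
    rw [Real.rpow_natCast, cAux_pow_pred hk]
  rw [e1, e2] at h
  -- h : t * k⁻¹ ≤ 1/k * t^k + (k-1)/k * c^k
  rw [qStar_eq hk]
  have hck : c ^ k = c / k := cAux_pow hk
  have h' := mul_le_mul_of_nonneg_left h hk0.le
  have htk : (k:ℝ) * (t * (k:ℝ)⁻¹) = t := by field_simp
  have hrhs : (k:ℝ) * (1/(k:ℝ) * t^k + ((k:ℝ)-1)/k * c^k) = t^k + ((k:ℝ)-1) * c^k := by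
    field_simp
  rw [htk, hrhs] at h'
  have hmul : ((k:ℝ)-1) * c ^ k = ((k:ℝ)-1) * (c / k) := by rw [hck]
  show t - t ^ k ≤ ((k:ℝ) - 1) * c / k
  have : ((k:ℝ)-1) * (c / k) = ((k:ℝ)-1) * c / k := by ring
  linarith

/-- key equality: `cAux k - cAux k ^ k = qStar k`. -/
lemma cAux_sub_pow {k : ℕ} (hk : 2 ≤ k) : cAux k - cAux k ^ k = qStar k := by
  have hk1 := one_lt_cast hk
  have hk0 : (0:ℝ) < k := by linarith
  rw [cAux_pow hk, qStar_eq hk]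
  field_simp

lemma cutBound_nonneg {k : ℕ} {q : ℝ} (hq0 : 0 ≤ q) : ∀ m, 0 ≤ cutBound k q m := by
  intro m
  induction m with
  | zero => exact pow_nonneg hq0 k
  | succ n ih => exact pow_nonneg (add_nonneg ih hq0) k

lemma cutBound_mono {k : ℕ} {q : ℝ} (hq0 : 0 ≤ q) : Monotone (cutBound k q) := by
  apply monotone_nat_of_le_succ
  intro n
  induction n with
  | zero =>
    show q ^ k ≤ (q ^ k + q) ^ k
    calc q ^ k ≤ (q ^ k + q) ^ k := by
          have : q ≤ q ^ k + q := le_add_of_nonneg_left (pow_nonneg hq0 k)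
          exact pow_le_pow_left₀ hq0 this k
  | succ n ih =>
    show (cutBound k q n + q) ^ k ≤ (cutBound k q (n+1) + q) ^ k
    exact pow_le_pow_left₀ (add_nonneg (cutBound_nonneg hq0 n) hq0)
      (add_le_add_left ih q) k

lemma cutBound_le_fixed {k : ℕ} {q : ℝ} (hq0 : 0 ≤ q) {z : ℝ} (hz0 : 0 ≤ z)
    (hz : z = (z + q) ^ k) : ∀ m, cutBound k q m ≤ z := by
  intro m
  induction m with
  | zero =>
    show q ^ k ≤ z
    calc q ^ k ≤ (z + q) ^ k := pow_le_pow_left₀ hq0 (by linarith) k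
      _ = z := hz.symm
  | succ n ih =>
    show (cutBound k q n + q) ^ k ≤ z
    calc (cutBound k q n + q) ^ k ≤ (z + q) ^ k :=
          pow_le_pow_left₀ (add_nonneg (cutBound_nonneg hq0 n) hq0) (by linarith) k
      _ = z := hz.symm

lemma cutBound_succ_eq {k : ℕ} {q : ℝ} :
    (fun m => cutBound k q (m + 1)) = fun m => (cutBound k q m + q) ^ k := rfl

/-- a limit of the sequence is a fixed point. -/
lemma limit_is_fixed {k : ℕ} {q : ℝ} {L : ℝ}
    (hT : Tendsto (cutBound k q) atTop (nhds L)) : L = (L + q) ^ k := by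
  have h1 : Tendsto (fun m => cutBound k q (m + 1)) atTop (nhds L) :=
    hT.comp (Filter.tendsto_add_atTop_nat 1)
  have h2 : Tendsto (fun m => (cutBound k q m + q) ^ k) atTop (nhds ((L + q) ^ k)) :=
    (hT.add tendsto_const_nhds).pow k
  rw [cutBound_succ_eq] at h1
  exact tendsto_nhds_unique h1 h2

/-- For fixed `q ∈ [0,1]` and `k ≥ 2`, the sequence `C_n(q)` given by
`C_1(q) = q^k`, `C_n(q) = (C_{n-1}(q)+q)^k` is nondecreasing in `n`; it converges
to the smallest (nonnegative) solution `z` of `z = (z+q)^k` if and only if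
`0 ≤ q ≤ q*_k := ((k-1)/k^2) k^{(k-2)/(k-1)}`, and diverges to infinity for
`q > q*_k`. -/
theorem cutBound_monotone_and_critical (k : ℕ) (hk : 2 ≤ k) (q : ℝ)
    (hq0 : 0 ≤ q) (hq1 : q ≤ 1) :
    Monotone (cutBound k q) ∧
    (q ≤ qStar k →
      ∃ z : ℝ, IsLeast {z : ℝ | 0 ≤ z ∧ z = (z + q) ^ k} z ∧
        Tendsto (cutBound k q) atTop (nhds z)) ∧
    (qStar k < q → Tendsto (cutBound k q) atTop atTop) := by
  have hk1 := one_lt_cast hk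
  have hk0 : (0:ℝ) < k := by linarith
  have hmono := cutBound_mono (k := k) hq0
  refine ⟨hmono, ?_, ?_⟩
  · -- convergence when q ≤ qStar
    intro hq
    set c := cAux k with hc
    have hcpos := cAux_pos hk
    -- qStar k ≤ c, hence q ≤ c
    have hqsc : qStar k ≤ c := by
      rw [qStar_eq hk]
      rw [div_le_iff₀ hk0]
      nlinarith
    have hcq : q ≤ c := hq.trans hqsc
    -- IVT: find a fixed point in [0, c - q]
    have hcont : ContinuousOn (fun z : ℝ => (z + q) ^ k - z) (Set.Icc 0 (c - q)) :=
      (((continuous_id.add continuous_const).pow k).sub continuous_id).continuousOn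
    have hiv := intermediate_value_Icc' (by linarith : (0:ℝ) ≤ c - q) hcont
    have h0mem : (0:ℝ) ∈ Set.Icc ((c - q + q) ^ k - (c - q)) ((0 + q) ^ k - 0) := by
      constructor
      · have : c - c ^ k = qStar k := cAux_sub_pow hk
        have : (c - q + q) ^ k - (c - q) = q - (c - c ^ k) := by ring_nf
        rw [this, cAux_sub_pow hk]
        linarith
      · simp only [zero_add, sub_zero]
        positivity
    obtain ⟨z₀, hz₀mem, hz₀⟩ := hiv h0mem
    have hz₀0 : 0 ≤ z₀ := hz₀mem.1
    have hz₀fix : z₀ = (z₀ + q) ^ k := by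
      have : (z₀ + q) ^ k - z₀ = 0 := hz₀
      linarith
    -- the sequence is bounded above by z₀, so it converges to its sup
    have hbdd : BddAbove (Set.range (cutBound k q)) := by
      refine ⟨z₀, ?_⟩
      rintro _ ⟨m, rfl⟩
      exact cutBound_le_fixed hq0 hz₀0 hz₀fix m
    have hT := tendsto_atTop_ciSup hmono hbdd
    set L := ⨆ m, cutBound k q m with hL
    have hL0 : 0 ≤ L :=
      le_trans (cutBound_nonneg hq0 0) (le_ciSup hbdd 0)
    have hLfix : L = (L + q) ^ k := limit_is_fixed hT
    refine ⟨L, ⟨⟨hL0, hLfix⟩, ?_⟩, hT⟩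
    rintro z ⟨hz0, hzfix⟩
    exact ciSup_le (cutBound_le_fixed hq0 hz0 hzfix)
  · -- divergence when qStar < q
    intro hq
    have hlt : ∀ z : ℝ, 0 ≤ z → z < (z + q) ^ k := by
      intro z hz
      have h := sub_pow_le_qStar hk (t := z + q) (by linarith)
      linarith
    rcases tendsto_of_monotone hmono with h | ⟨L, hL⟩
    · exact h
    · exfalso
      have hL0 : 0 ≤ L := ge_of_tendsto' hL (cutBound_nonneg hq0)
      have := limit_is_fixed hL
      exact absurd this (hlt L hL0).ne
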